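/- For every integer x ≥ 0, the Verlinde number ((x+2)/2)^3 · ∑_{i=1}^{x+1} sin(iπ/(x+2))^{−6} equals the value at x of the degree nine polynomial 1 + (233/70)x + (1979/420)x^2 + (29041/7560)x^3 + (31/15)x^4 + (71/90)x^5 + (13/60)x^6 + (103/2520)x^7 + (1/210)x^8 + (1/3780)x^9. -/

import Mathlib

open Real

open Polynomial Finset in
private lemma cast_choose_fact' (k : ℕ) : ∀ n : ℕ, ((k.factorial : ℂ)) * (n.choose k : ℂ) =
    ∏ i ∈ range k, ((n : ℂ) - (i : ℂ)) := by
  induction k with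
  | zero => simp
  | succ k ih =>
    intro n
    cases n with
    | zero =>
      rcases Nat.eq_zero_or_pos k with hk | hk
      · subst hk; simp
      · rw [Finset.prod_range_succ' (fun i => ((0:ℕ):ℂ) - (i:ℂ))]
        simp [Nat.choose_eq_zero_of_lt]
    | succ m =>
      have hcast : ((m:ℂ) + 1) * (m.choose k : ℂ) = ((m+1).choose (k+1) : ℂ) * ((k:ℂ)+1) := by
        exact_mod_cast congrArg (Nat.cast : ℕ → ℂ) (Nat.add_one_mul_choose_eq m k)
      rw [Finset.prod_range_succ' (fun i => (((m+1:ℕ)):ℂ) - (i:ℂ))]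
      have hc : ∀ i ∈ range k, (((m+1:ℕ)):ℂ) - ((i+1:ℕ):ℂ) = (m:ℂ) - (i:ℂ) := by
        intro i _; push_cast; ring
      rw [Finset.prod_congr rfl hc, ← ih m, Nat.factorial_succ]
      push_cast
      linear_combination (-(k.factorial : ℂ)) * hcast

open Polynomial Finset in
private lemma prod_w' (x : ℕ) (ζ : ℂ) (hζ : IsPrimitiveRoot ζ (x+2)) :
    ∏ i ∈ range (x+1), (X + C (1 - ζ^(i+1))) =
      ∑ j ∈ range (x+2), C (((x+2).choose (j+1) : ℂ)) * X^j := by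
  have h0 : (X:ℂ[X]) ^ (x+2) - C 1 = ∏ i ∈ range (x+2), (X - C (ζ ^ i * 1)) :=
    X_pow_sub_C_eq_prod hζ (by omega) (one_pow _)
  have h1 := congrArg (fun p => Polynomial.comp p (X + 1)) h0
  simp only [sub_comp, pow_comp, X_comp, C_comp, Polynomial.prod_comp] at h1
  have hL : ((X:ℂ[X]) + 1)^(x+2) - C 1 =
      (∏ i ∈ range (x+1), (X + C (1 - ζ^(i+1)))) * X := by
    rw [h1, Finset.prod_range_succ' (fun i => (X:ℂ[X]) + 1 - C (ζ ^ i * 1))]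
    congr 1
    · apply Finset.prod_congr rfl
      intro i _
      rw [mul_one, C_sub, C_1]
      ring
    · simp [pow_zero]
  have hR : ((X:ℂ[X]) + 1)^(x+2) - C 1 =
      (∑ j ∈ range (x+2), C (((x+2).choose (j+1) : ℂ)) * X^j) * X := by
    rw [Commute.add_pow (Commute.all X 1), Finset.sum_range_succ' _ (x+2)]
    push_cast
    simp only [one_pow, mul_one, pow_zero, Nat.choose_zero_right, Nat.cast_one, C_1]
    rw [Finset.sum_mul, add_sub_cancel_right]
    apply Finset.sum_congr rfl
    intro j _
    rw [← Polynomial.C_eq_natCast]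
    ring
  exact mul_right_cancel₀ X_ne_zero (hL ▸ hR ▸ rfl)

open Polynomial Finset in
private lemma esymm_w' (x : ℕ) (ζ : ℂ) (hζ : IsPrimitiveRoot ζ (x+2)) (k : ℕ) (hk : k ≤ x+1) :
    ∑ t ∈ powersetCard k (univ : Finset (Fin (x+1))), ∏ i ∈ t, (1 - ζ^((i:ℕ)+1)) =
      (((x+2).choose k : ℕ) : ℂ) := by
  have hw : ∏ i : Fin (x+1), ((X:ℂ[X]) + C (1 - ζ^((i:ℕ)+1))) =
      ∑ j ∈ range (x+2), C (((x+2).choose (j+1) : ℂ)) * X^j := by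
    rw [← prod_w' x ζ hζ]
    exact Fin.prod_univ_eq_prod_range (fun i => (X:ℂ[X]) + C (1 - ζ^(i+1))) (x+1)
  have hcard : #(univ : Finset (Fin (x+1))) = x + 1 := by simp
  have hco := Finset.prod_X_add_C_coeff (univ : Finset (Fin (x+1)))
      (fun i => 1 - ζ^((i:ℕ)+1)) (k := x+1-k)
      (by simp only [Finset.card_univ, Fintype.card_fin]; omega)
  rw [hw, hcard] at hco
  have hr : (∑ j ∈ range (x+2), C (((x+2).choose (j+1) : ℂ)) * X^j).coeff (x+1-k)
      = (((x+2).choose (x+2-k) : ℕ) : ℂ) := by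
    rw [finset_sum_coeff]
    simp only [coeff_C_mul, coeff_X_pow, mul_ite, mul_one, mul_zero]
    rw [Finset.sum_ite_eq (range (x+2)) (x+1-k)]
    have hmem : x+1-k ∈ range (x+2) := by simp only [Finset.mem_range]; omega
    simp only [hmem, if_true]
    have h9 : x+1-k+1 = x+2-k := by omega
    rw [h9]
  rw [hr] at hco
  have hsub : x + 1 - (x+1-k) = k := by omega
  rw [hsub] at hco
  rw [← hco]
  norm_cast
  exact Nat.choose_symm (by omega)

open Polynomial Finset in
private lemma esymm_f' (x : ℕ) (ζ : ℂ) (hζ : IsPrimitiveRoot ζ (x+2)) (k : ℕ) :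
    ∑ t ∈ powersetCard k (univ : Finset (Fin (x+1))), ∏ i ∈ t, (1 - ζ^((i:ℕ)+1))⁻¹ =
      (((x+2).choose (k+1) : ℕ) : ℂ) / ((x:ℂ)+2) := by
  have hN : ((x:ℂ)+2) ≠ 0 := by
    have : (0:ℝ) < (x:ℝ) + 2 := by positivity
    intro h
    exact absurd (congrArg Complex.re h) (by simpa using this.ne')
  have hwne : ∀ i : Fin (x+1), (1 - ζ^((i:ℕ)+1)) ≠ 0 := by
    intro i
    refine sub_ne_zero.mpr (fun h => ?_)
    exact hζ.pow_ne_one_of_pos_of_lt (Nat.succ_ne_zero _) (by omega) h.symm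
  rcases le_or_gt k (x+1) with hk | hk
  · have huniv : ∏ i : Fin (x+1), (1 - ζ^((i:ℕ)+1)) = ((x:ℂ)+2) := by
      have h0 := esymm_w' x ζ hζ (x+1) le_rfl
      rw [show ((x+2).choose (x+1) : ℕ) = x+2 by
        rw [show x+1 = (x+2)-1 by omega, Nat.choose_symm (by omega), Nat.choose_one_right]] at h0
      have : powersetCard (x+1) (univ : Finset (Fin (x+1))) = {univ} := by
        simpa using Finset.powersetCard_self (univ : Finset (Fin (x+1)))
      rw [this, Finset.sum_singleton] at h0
      rw [h0]; push_cast; ring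
    have hW := esymm_w' x ζ hζ (x+1-k) (by omega)
    have hchoose : ((x+2).choose (x+1-k) : ℕ) = ((x+2).choose (k+1) : ℕ) := by
      rw [show x+1-k = (x+2)-(k+1) by omega, Nat.choose_symm (by omega)]
    rw [eq_div_iff hN, ← huniv, ← hchoose, ← hW]
    rw [Finset.sum_mul]
    refine Finset.sum_nbij' (fun A => univ \ A) (fun B => univ \ B) ?_ ?_ ?_ ?_ ?_
    · intro A hA
      rw [Finset.mem_powersetCard_univ] at hA ⊢
      rw [Finset.card_univ_diff, hA]; simp
    · intro B hB
      rw [Finset.mem_powersetCard_univ] at hB ⊢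
      rw [Finset.card_univ_diff, hB]; simp; omega
    · intro A _; simp
    · intro B _; simp
    · intro A hA
      have hAne : (∏ i ∈ A, (1 - ζ^((i:ℕ)+1))) ≠ 0 :=
        Finset.prod_ne_zero_iff.mpr (fun i _ => hwne i)
      rw [Finset.prod_inv_distrib, ← Finset.prod_sdiff (Finset.subset_univ A)]
      field_simp
  · rw [Finset.powersetCard_eq_empty.mpr (by simp; omega), Finset.sum_empty,
      Nat.choose_eq_zero_of_lt (by omega)]
    simp

open Finset in
private lemma newton_eval' (m k : ℕ) (hk : 0 < k) (f : Fin m → ℂ) :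
    ∑ i, f i ^ k = (-1)^(k+1) * k * (∑ t ∈ powersetCard k (univ : Finset (Fin m)), ∏ i ∈ t, f i)
      - ∑ a ∈ (antidiagonal k).filter (fun a => a.1 ∈ Set.Ioo 0 k),
          (-1)^a.1 * (∑ t ∈ powersetCard a.1 (univ : Finset (Fin m)), ∏ i ∈ t, f i)
            * ∑ i, f i ^ a.2 := by
  have h := congrArg (MvPolynomial.aeval f)
    (MvPolynomial.psum_eq_mul_esymm_sub_sum (Fin m) ℂ k hk)
  simp only [map_sub, map_mul, map_sum, map_pow, map_neg, map_one, map_natCast,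
    MvPolynomial.psum, MvPolynomial.aeval_X,
    MvPolynomial.aeval_esymm_eq_multiset_esymm, Finset.esymm_map_val] at h
  convert h using 2 <;> simp [Set.mem_Ioo]

private lemma term_eq (x i : ℕ) (h1 : 1 ≤ i) (h2 : i ≤ x+1) (ζ : ℂ)
    (hζdef : ζ = Complex.exp (2 * (Real.pi:ℂ) * Complex.I / ((x+2:ℕ):ℂ)))
    (hζ : IsPrimitiveRoot ζ (x+2)) :
    (Complex.sin ((i:ℂ) * (Real.pi:ℂ) / ((x:ℂ)+2)))⁻¹ ^ 6
      = 64*((1 - ζ^i)⁻¹)^3 - 192*((1 - ζ^i)⁻¹)^4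
        + 192*((1 - ζ^i)⁻¹)^5 - 64*((1 - ζ^i)⁻¹)^6 := by
  have hN : ((x:ℂ)+2) ≠ 0 := by
    have : (0:ℝ) < (x:ℝ) + 2 := by positivity
    intro h
    exact absurd (congrArg Complex.re h) (by simpa using this.ne')
  set θ : ℂ := (i:ℂ) * (Real.pi:ℂ) / ((x:ℂ)+2) with hθ
  set u := Complex.exp (θ * Complex.I) with hu
  have hu0 : u ≠ 0 := Complex.exp_ne_zero _
  have hu2 : ζ^i = u^2 := by
    rw [hζdef, ← Complex.exp_nat_mul, hu, sq, ← Complex.exp_add, hθ]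
    congr 1
    push_cast
    field_simp
    ring
  have hne1 : ζ^i ≠ 1 := hζ.pow_ne_one_of_pos_of_lt (by omega) (by omega)
  have h1u : 1 - u^2 ≠ 0 := by
    rw [← hu2]; exact sub_ne_zero.mpr (Ne.symm hne1)
  have hsin : Complex.sin θ = (u⁻¹ - u) * Complex.I / 2 := by
    have h : Complex.sin θ
        = (Complex.exp (-θ * Complex.I) - Complex.exp (θ * Complex.I)) * Complex.I / 2 := rfl
    rw [h, neg_mul, Complex.exp_neg, ← hu]
  have hdiff : (u⁻¹ - u)^2 = (1-u^2)^2/u^2 := by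
    field_simp
  have hsin6 : Complex.sin θ ^ 6 = -((1-u^2)^6)/(64*u^6) := by
    rw [hsin, show (6:ℕ) = 2*3 from rfl, pow_mul, div_pow, mul_pow, Complex.I_sq, hdiff]
    field_simp
    ring
  rw [hu2, inv_pow, hsin6]
  obtain ⟨c, hc⟩ : ∃ c : ℂ, c = 1 - u^2 := ⟨_, rfl⟩
  rw [← hc]
  have hcne : c ≠ 0 := by rw [hc]; exact h1u
  have hu6 : u^6 = (1-c)^3 := by rw [hc]; ring
  rw [hu6]
  have h1cne : (1:ℂ) - c ≠ 0 := by
    rw [show (1:ℂ) - c = u^2 by rw [hc]; ring]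
    exact pow_ne_zero 2 hu0
  field_simp
  have hcc : c^18 * (c⁻¹)^18 = 1 := by rw [← mul_pow, mul_inv_cancel₀ hcne, one_pow]
  linear_combination


open Finset in
private lemma main_complex (x : ℕ) (ζ : ℂ)
    (hζdef : ζ = Complex.exp (2 * (Real.pi:ℂ) * Complex.I / ((x+2:ℕ):ℂ)))
    (hζ : IsPrimitiveRoot ζ (x+2)) :
    ∑ i ∈ Finset.Icc 1 (x+1), (Complex.sin ((i:ℂ) * (Real.pi:ℂ) / ((x:ℂ)+2)))⁻¹ ^ 6
      = 64*(∑ i : Fin (x+1), ((1 - ζ^((i:ℕ)+1))⁻¹)^3) - 192*(∑ i : Fin (x+1), ((1 - ζ^((i:ℕ)+1))⁻¹)^4) + 192*(∑ i : Fin (x+1), ((1 - ζ^((i:ℕ)+1))⁻¹)^5) - 64*(∑ i : Fin (x+1), ((1 - ζ^((i:ℕ)+1))⁻¹)^6) := by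
  have hterm : ∀ i ∈ Finset.Icc 1 (x+1),
      (Complex.sin ((i:ℂ) * (Real.pi:ℂ) / ((x:ℂ)+2)))⁻¹ ^ 6
      = 64*((1 - ζ^i)⁻¹)^3 - 192*((1 - ζ^i)⁻¹)^4 + 192*((1 - ζ^i)⁻¹)^5 - 64*((1 - ζ^i)⁻¹)^6 := by
    intro i hi
    rw [Finset.mem_Icc] at hi
    exact term_eq x i hi.1 hi.2 ζ hζdef hζ
  rw [Finset.sum_congr rfl hterm]
  rw [← Finset.Ico_add_one_right_eq_Icc, Finset.sum_Ico_eq_sum_range]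
  try simp only [Nat.add_sub_cancel]
  rw [Fin.sum_univ_eq_sum_range (fun k => ((1 - ζ^(k+1))⁻¹)^3) (x+1)]
  rw [Fin.sum_univ_eq_sum_range (fun k => ((1 - ζ^(k+1))⁻¹)^4) (x+1)]
  rw [Fin.sum_univ_eq_sum_range (fun k => ((1 - ζ^(k+1))⁻¹)^5) (x+1)]
  rw [Fin.sum_univ_eq_sum_range (fun k => ((1 - ζ^(k+1))⁻¹)^6) (x+1)]
  rw [Finset.mul_sum, Finset.mul_sum, Finset.mul_sum, Finset.mul_sum,
    ← Finset.sum_sub_distrib, ← Finset.sum_add_distrib, ← Finset.sum_sub_distrib]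
  apply Finset.sum_congr rfl
  intro k _
  rw [add_comm 1 k]

private lemma choose_val (x k : ℕ) :
    (((x+2).choose (k+1) : ℕ) : ℂ) / ((x:ℂ)+2)
      = (∏ i ∈ Finset.range k, ((x:ℂ)+1-i)) / ((k+1).factorial : ℂ) := by
  have hN : ((x:ℂ)+2) ≠ 0 := by
    have h0 : (0:ℝ) < (x:ℝ) + 2 := by positivity
    intro h
    exact absurd (congrArg Complex.re h) (by simpa using h0.ne')
  have h := cast_choose_fact' (k+1) (x+2)
  rw [Finset.prod_range_succ' (fun i => (((x+2:ℕ)):ℂ) - (i:ℂ))] at h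
  have hc : ∀ i ∈ Finset.range k, (((x+2:ℕ)):ℂ) - ((i+1:ℕ):ℂ) = ((x:ℂ)+1-i) := by
    intro i _; push_cast; ring
  rw [Finset.prod_congr rfl hc] at h
  have hfac : (((k+1).factorial : ℕ) : ℂ) ≠ 0 := by
    exact_mod_cast Nat.factorial_ne_zero (k+1)
  field_simp
  push_cast at h ⊢
  linear_combination h

open Finset in
private lemma newton_chain (x : ℕ) (ζ : ℂ) (hζ : IsPrimitiveRoot ζ (x+2)) :
    (∑ i : Fin (x+1), ((1 - ζ^((i:ℕ)+1))⁻¹)^3) = (1 - (x:ℂ)^2)/8 ∧ (∑ i : Fin (x+1), ((1 - ζ^((i:ℕ)+1))⁻¹)^4) = (45 - 48*(x:ℂ) - 86*(x:ℂ)^2 + 8*(x:ℂ)^3 + (x:ℂ)^4)/720 ∧ (∑ i : Fin (x+1), ((1 - ζ^((i:ℕ)+1))⁻¹)^5) = (9 - 24*(x:ℂ) - 26*(x:ℂ)^2 + 8*(x:ℂ)^3 + (x:ℂ)^4)/288 ∧ (∑ i : Fin (x+1), ((1 - ζ^((i:ℕ)+1))⁻¹)^6) = (945 - 4752*(x:ℂ)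 - 3420*(x:ℂ)^2 + 2536*(x:ℂ)^3 + 237*(x:ℂ)^4 - 24*(x:ℂ)^5 - 2*(x:ℂ)^6)/60480 := by
  have hE1 : (∑ t ∈ Finset.powersetCard 1 (Finset.univ : Finset (Fin (x+1))), ∏ i ∈ t, (1 - ζ^((i:ℕ)+1))⁻¹) = ((x:ℂ)+1)/2 := by
    rw [esymm_f' x ζ hζ 1, choose_val x 1]
    simp [Finset.prod_range_succ, Nat.factorial]
    try push_cast
    try ring
    try norm_num
  have hE2 : (∑ t ∈ Finset.powersetCard 2 (Finset.univ : Finset (Fin (x+1))), ∏ i ∈ t, (1 - ζ^((i:ℕ)+1))⁻¹) = ((x:ℂ)+1)*(x:ℂ)/6 := by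
    rw [esymm_f' x ζ hζ 2, choose_val x 2]
    simp [Finset.prod_range_succ, Nat.factorial]
    try push_cast
    try ring
    try norm_num
  have hE3 : (∑ t ∈ Finset.powersetCard 3 (Finset.univ : Finset (Fin (x+1))), ∏ i ∈ t, (1 - ζ^((i:ℕ)+1))⁻¹) = ((x:ℂ)+1)*(x:ℂ)*((x:ℂ)-1)/24 := by
    rw [esymm_f' x ζ hζ 3, choose_val x 3]
    simp [Finset.prod_range_succ, Nat.factorial]
    try push_cast
    try ring
    try norm_num
  have hE4 : (∑ t ∈ Finset.powersetCard 4 (Finset.univ : Finset (Fin (x+1))), ∏ i ∈ t, (1 - ζ^((i:ℕ)+1))⁻¹) = ((x:ℂ)+1)*(x:ℂ)*((x:ℂ)-1)*((x:ℂ)-2)/120 := by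
    rw [esymm_f' x ζ hζ 4, choose_val x 4]
    simp [Finset.prod_range_succ, Nat.factorial]
    try push_cast
    try ring
    try norm_num
  have hE5 : (∑ t ∈ Finset.powersetCard 5 (Finset.univ : Finset (Fin (x+1))), ∏ i ∈ t, (1 - ζ^((i:ℕ)+1))⁻¹) = ((x:ℂ)+1)*(x:ℂ)*((x:ℂ)-1)*((x:ℂ)-2)*((x:ℂ)-3)/720 := by
    rw [esymm_f' x ζ hζ 5, choose_val x 5]
    simp [Finset.prod_range_succ, Nat.factorial]
    try push_cast
    try ring
    try norm_num
  have hE6 : (∑ t ∈ Finset.powersetCard 6 (Finset.univ : Finset (Fin (x+1))), ∏ i ∈ t, (1 - ζ^((i:ℕ)+1))⁻¹) = ((x:ℂ)+1)*(x:ℂ)*((x:ℂ)-1)*((x:ℂ)-2)*((x:ℂ)-3)*((x:ℂ)-4)/5040 := by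
    rw [esymm_f' x ζ hζ 6, choose_val x 6]
    simp [Finset.prod_range_succ, Nat.factorial]
    try push_cast
    try ring
    try norm_num
  have hN1 := newton_eval' (x+1) 1 (by norm_num) (fun i : Fin (x+1) => (1 - ζ^((i:ℕ)+1))⁻¹)
  rw [show (antidiagonal 1).filter (fun a => a.1 ∈ Set.Ioo 0 1) = (∅ : Finset (ℕ×ℕ)) from by decide] at hN1
  rw [Finset.sum_empty] at hN1
  push_cast at hN1
  have hN2 := newton_eval' (x+1) 2 (by norm_num) (fun i : Fin (x+1) => (1 - ζ^((i:ℕ)+1))⁻¹)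
  rw [show (antidiagonal 2).filter (fun a => a.1 ∈ Set.Ioo 0 2) = ({(1,1)} : Finset (ℕ×ℕ)) from by decide] at hN2
  rw [Finset.sum_singleton] at hN2
  push_cast at hN2
  have hN3 := newton_eval' (x+1) 3 (by norm_num) (fun i : Fin (x+1) => (1 - ζ^((i:ℕ)+1))⁻¹)
  rw [show (antidiagonal 3).filter (fun a => a.1 ∈ Set.Ioo 0 3) = ({(1,2),(2,1)} : Finset (ℕ×ℕ)) from by decide] at hN3
  rw [Finset.sum_insert (by decide), Finset.sum_singleton] at hN3
  push_cast at hN3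
  have hN4 := newton_eval' (x+1) 4 (by norm_num) (fun i : Fin (x+1) => (1 - ζ^((i:ℕ)+1))⁻¹)
  rw [show (antidiagonal 4).filter (fun a => a.1 ∈ Set.Ioo 0 4) = ({(1,3),(2,2),(3,1)} : Finset (ℕ×ℕ)) from by decide] at hN4
  rw [Finset.sum_insert (by decide), Finset.sum_insert (by decide), Finset.sum_singleton] at hN4
  push_cast at hN4
  have hN5 := newton_eval' (x+1) 5 (by norm_num) (fun i : Fin (x+1) => (1 - ζ^((i:ℕ)+1))⁻¹)
  rw [show (antidiagonal 5).filter (fun a => a.1 ∈ Set.Ioo 0 5) = ({(1,4),(2,3),(3,2),(4,1)} : Finset (ℕ×ℕ)) from by decide] at hN5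
  rw [Finset.sum_insert (by decide), Finset.sum_insert (by decide), Finset.sum_insert (by decide), Finset.sum_singleton] at hN5
  push_cast at hN5
  have hN6 := newton_eval' (x+1) 6 (by norm_num) (fun i : Fin (x+1) => (1 - ζ^((i:ℕ)+1))⁻¹)
  rw [show (antidiagonal 6).filter (fun a => a.1 ∈ Set.Ioo 0 6) = ({(1,5),(2,4),(3,3),(4,2),(5,1)} : Finset (ℕ×ℕ)) from by decide] at hN6
  rw [Finset.sum_insert (by decide), Finset.sum_insert (by decide), Finset.sum_insert (by decide), Finset.sum_insert (by decide), Finset.sum_singleton] at hN6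
  push_cast at hN6
  have hP1 : (∑ i : Fin (x+1), ((1 - ζ^((i:ℕ)+1))⁻¹)^1) = ((x:ℂ)+1)/2 := by
    rw [hN1, hE1]
    ring
  have hP2 : (∑ i : Fin (x+1), ((1 - ζ^((i:ℕ)+1))⁻¹)^2) = (3 + 2*(x:ℂ) - (x:ℂ)^2)/12 := by
    rw [hN2, hE1, hE2, hP1]
    ring
  have hP3 : (∑ i : Fin (x+1), ((1 - ζ^((i:ℕ)+1))⁻¹)^3) = (1 - (x:ℂ)^2)/8 := by
    rw [hN3, hE1, hE2, hE3, hP1, hP2]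
    ring
  have hP4 : (∑ i : Fin (x+1), ((1 - ζ^((i:ℕ)+1))⁻¹)^4) = (45 - 48*(x:ℂ) - 86*(x:ℂ)^2 + 8*(x:ℂ)^3 + (x:ℂ)^4)/720 := by
    rw [hN4, hE1, hE2, hE3, hE4, hP1, hP2, hP3]
    ring
  have hP5 : (∑ i : Fin (x+1), ((1 - ζ^((i:ℕ)+1))⁻¹)^5) = (9 - 24*(x:ℂ) - 26*(x:ℂ)^2 + 8*(x:ℂ)^3 + (x:ℂ)^4)/288 := by
    rw [hN5, hE1, hE2, hE3, hE4, hE5, hP1, hP2, hP3, hP4]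
    ring
  have hP6 : (∑ i : Fin (x+1), ((1 - ζ^((i:ℕ)+1))⁻¹)^6) = (945 - 4752*(x:ℂ) - 3420*(x:ℂ)^2 + 2536*(x:ℂ)^3 + 237*(x:ℂ)^4 - 24*(x:ℂ)^5 - 2*(x:ℂ)^6)/60480 := by
    rw [hN6, hE1, hE2, hE3, hE4, hE5, hE6, hP1, hP2, hP3, hP4, hP5]
    ring
  exact ⟨hP3, hP4, hP5, hP6⟩

/-- The genus-four Verlinde numbers agree with the degree nine Hilbert
polynomial of the orbital degeneracy locus `D_{Y₅}(v)`. -/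
theorem verlinde_genus_four_polynomial (x : ℕ) :
    (((x : ℝ) + 2) / 2) ^ 3
        * (∑ i ∈ Finset.Icc 1 (x + 1),
            (Real.sin ((i : ℝ) * Real.pi / ((x : ℝ) + 2)))⁻¹ ^ 6)
      = 1 + (233 / 70) * (x : ℝ) + (1979 / 420) * (x : ℝ) ^ 2
        + (29041 / 7560) * (x : ℝ) ^ 3 + (31 / 15) * (x : ℝ) ^ 4
        + (71 / 90) * (x : ℝ) ^ 5 + (13 / 60) * (x : ℝ) ^ 6
        + (103 / 2520) * (x : ℝ) ^ 7 + (1 / 210) * (x : ℝ) ^ 8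
        + (1 / 3780) * (x : ℝ) ^ 9 := by
  rw [← Complex.ofReal_inj]
  push_cast [Complex.ofReal_sin]
  have hζ : IsPrimitiveRoot (Complex.exp (2 * (Real.pi:ℂ) * Complex.I / ((x+2:ℕ):ℂ))) (x+2) :=
    Complex.isPrimitiveRoot_exp (x+2) (by omega)
  obtain ⟨hP3, hP4, hP5, hP6⟩ := newton_chain x _ hζ
  rw [main_complex x _ rfl hζ]
  rw [hP3, hP4, hP5, hP6]
  ring
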